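/- For every generator u ∈ {a_i^{±1}, b_i^{±1} : 1 ≤ i ≤ n} ∪ {e_j, f_j : 1 ≤ j < n} of U_{α,β}(gl_n) and all 1 ≤ s,t ≤ n, one has ⟨u, x_{st}^ℓ⟩ = δ_{st} ε(u); explicitly ⟨a_i, x_{st}^ℓ⟩ = δ_{st} = ⟨b_i, x_{st}^ℓ⟩ and ⟨e_j, x_{st}^ℓ⟩ = 0 = ⟨f_j, x_{st}^ℓ⟩. -/

import Mathlib

open scoped TensorProduct

noncomputable section

universe u v

/-- The number of inversions (the length) of a permutation of `Fin n`. -/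
def permLength {n : ℕ} (σ : Equiv.Perm (Fin n)) : ℕ :=
  (Finset.univ.filter fun p : Fin n × Fin n => p.1 < p.2 ∧ σ p.2 < σ p.1).card

/-- The defining relations of the two-parameter quantum matrix bialgebra
`O_{α,β}(M_n)`, for a family `x i j` of elements of a `k`-algebra `A`. -/
def QMRel {k : Type u} [Field k] {A : Type v} [Ring A] [Algebra k A]
    (n : ℕ) (α β : k) (x : Fin n → Fin n → A) : Prop :=
  (∀ i j l : Fin n, j < l → x i l * x i j = α⁻¹ • (x i j * x i l)) ∧
  (∀ i j l : Fin n, i < j → x j l * x i l = β • (x i l * x j l)) ∧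
  (∀ i j l m : Fin n, i < j → l < m → x j l * x i m = (β * α) • (x i m * x j l)) ∧
  (∀ i j l m : Fin n, i < j → l < m →
    x j m * x i l - x i l * x j m = (β - α) • (x i m * x j l))

/-- The quantum determinant `g = ∑_σ (-β)^{-ℓ(σ)} x_{σ(1),1} ⋯ x_{σ(n),n}`. -/
def qdet {k : Type u} [Field k] {A : Type v} [Ring A] [Algebra k A]
    (n : ℕ) (β : k) (x : Fin n → Fin n → A) : A :=
  ∑ σ : Equiv.Perm (Fin n),
    ((-β)⁻¹ ^ permLength σ) • ((List.finRange n).map fun i => x (σ i) i).prod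

/-- The defining relations of the two-parameter quantized enveloping algebra
`U_{α,β}(gl_n)`, for families `a i, b i` (with inverses `ai i, bi i`, `1 ≤ i ≤ n`)
and `e j, f j` (`1 ≤ j < n`) of elements of a `k`-algebra `U`. -/
structure UglRel {k : Type u} [Field k] {U : Type v} [Ring U] [Algebra k U]
    (n : ℕ) (α β : k) (a ai b bi e f : ℕ → U) : Prop where
  comm_aa : ∀ i j, a i * a j = a j * a i
  comm_ab : ∀ i j, a i * b j = b j * a i
  comm_bb : ∀ i j, b i * b j = b j * b i
  inv_a : ∀ i, 1 ≤ i → i ≤ n → a i * ai i = 1 ∧ ai i * a i = 1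
  inv_b : ∀ i, 1 ≤ i → i ≤ n → b i * bi i = 1 ∧ bi i * b i = 1
  rel_ae : ∀ i j, 1 ≤ i → i ≤ n → 1 ≤ j → j < n →
    a i * e j = (if i = j then α else if i = j + 1 then α⁻¹ else 1) • (e j * a i)
  rel_be : ∀ i j, 1 ≤ i → i ≤ n → 1 ≤ j → j < n →
    b i * e j = (if i = j then β else if i = j + 1 then β⁻¹ else 1) • (e j * b i)
  rel_af : ∀ i j, 1 ≤ i → i ≤ n → 1 ≤ j → j < n →
    a i * f j = (if i = j then α⁻¹ else if i = j + 1 then α else 1) • (f j * a i)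
  rel_bf : ∀ i j, 1 ≤ i → i ≤ n → 1 ≤ j → j < n →
    b i * f j = (if i = j then β⁻¹ else if i = j + 1 then β else 1) • (f j * b i)
  rel_ef : ∀ j l, 1 ≤ j → j < n → 1 ≤ l → l < n →
    e j * f l - f l * e j =
      if j = l then (α - β)⁻¹ • (a j * b (j + 1) - a (j + 1) * b j) else 0
  rel_ee : ∀ j l, 1 ≤ j → j < n → 1 ≤ l → l < n → j + 1 < l → e j * e l = e l * e j
  rel_ff : ∀ j l, 1 ≤ j → j < n → 1 ≤ l → l < n → j + 1 < l → f j * f l = f l * f j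
  serre_e1 : ∀ j, 1 ≤ j → j + 1 < n →
    e j ^ 2 * e (j + 1) - (α + β) • (e j * e (j + 1) * e j)
      + (α * β) • (e (j + 1) * e j ^ 2) = 0
  serre_e2 : ∀ j, 1 ≤ j → j + 1 < n →
    e j * e (j + 1) ^ 2 - (α + β) • (e (j + 1) * e j * e (j + 1))
      + (α * β) • (e (j + 1) ^ 2 * e j) = 0
  serre_f1 : ∀ j, 1 ≤ j → j + 1 < n →
    f j ^ 2 * f (j + 1) - (α⁻¹ + β⁻¹) • (f j * f (j + 1) * f j)
      + (α⁻¹ * β⁻¹) • (f (j + 1) * f j ^ 2) = 0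
  serre_f2 : ∀ j, 1 ≤ j → j + 1 < n →
    f j * f (j + 1) ^ 2 - (α⁻¹ + β⁻¹) • (f (j + 1) * f j * f (j + 1))
      + (α⁻¹ * β⁻¹) • (f (j + 1) ^ 2 * f j) = 0

/-- Auxiliary recursion for the root vectors: `EvecAux α e l d = E_{l+d, l}`. -/
def EvecAux {k : Type u} [Field k] {U : Type v} [Ring U] [Algebra k U]
    (α : k) (e : ℕ → U) (l : ℕ) : ℕ → U
  | 0 => e l
  | d + 1 => e (l + d + 1) * EvecAux α e l d - α⁻¹ • (EvecAux α e l d * e (l + d + 1))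

/-- The root vector `E_{kk,l} = [e_{kk}, E_{kk-1,l}]_{α⁻¹}` (with `E_{l,l} = e_l`). -/
def Eroot {k : Type u} [Field k] {U : Type v} [Ring U] [Algebra k U]
    (α : k) (e : ℕ → U) (kk l : ℕ) : U :=
  EvecAux α e l (kk - l)

/-- Auxiliary recursion for the root vectors: `FvecAux β f l d = F_{l+d, l}`. -/
def FvecAux {k : Type u} [Field k] {U : Type v} [Ring U] [Algebra k U]
    (β : k) (f : ℕ → U) (l : ℕ) : ℕ → U
  | 0 => f l
  | d + 1 => f (l + d + 1) * FvecAux β f l d - β⁻¹ • (FvecAux β f l d * f (l + d + 1))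

/-- The root vector `F_{kk,l} = [f_{kk}, F_{kk-1,l}]_{β⁻¹}` (with `F_{l,l} = f_l`). -/
def Froot {k : Type u} [Field k] {U : Type v} [Ring U] [Algebra k U]
    (β : k) (f : ℕ → U) (kk l : ℕ) : U :=
  FvecAux β f l (kk - l)

/-- The comultiplication and counit of `U_{α,β}(gl_n)` on the generators:
`a_i, b_i` (and their inverses) are group-like, `e_j` is `(w_j,1)`-primitive and
`f_j` is `(1,w_j')`-primitive, where `w_j = a_j b_{j+1}` and `w_j' = a_{j+1} b_j`. -/
structure UglComul (k : Type u) [Field k] {U : Type v} [Ring U] [Bialgebra k U]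
    (n : ℕ) (a ai b bi e f : ℕ → U) : Prop where
  com_a : ∀ i, 1 ≤ i → i ≤ n → Coalgebra.comul (R := k) (a i) = a i ⊗ₜ[k] a i
  com_ai : ∀ i, 1 ≤ i → i ≤ n → Coalgebra.comul (R := k) (ai i) = ai i ⊗ₜ[k] ai i
  com_b : ∀ i, 1 ≤ i → i ≤ n → Coalgebra.comul (R := k) (b i) = b i ⊗ₜ[k] b i
  com_bi : ∀ i, 1 ≤ i → i ≤ n → Coalgebra.comul (R := k) (bi i) = bi i ⊗ₜ[k] bi i
  cou_a : ∀ i, 1 ≤ i → i ≤ n → Coalgebra.counit (R := k) (a i) = (1 : k)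
  cou_ai : ∀ i, 1 ≤ i → i ≤ n → Coalgebra.counit (R := k) (ai i) = (1 : k)
  cou_b : ∀ i, 1 ≤ i → i ≤ n → Coalgebra.counit (R := k) (b i) = (1 : k)
  cou_bi : ∀ i, 1 ≤ i → i ≤ n → Coalgebra.counit (R := k) (bi i) = (1 : k)
  com_e : ∀ j, 1 ≤ j → j < n →
    Coalgebra.comul (R := k) (e j) = e j ⊗ₜ[k] 1 + (a j * b (j + 1)) ⊗ₜ[k] e j
  com_f : ∀ j, 1 ≤ j → j < n →
    Coalgebra.comul (R := k) (f j) = 1 ⊗ₜ[k] f j + f j ⊗ₜ[k] (a (j + 1) * b j)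
  cou_e : ∀ j, 1 ≤ j → j < n → Coalgebra.counit (R := k) (e j) = 0
  cou_f : ∀ j, 1 ≤ j → j < n → Coalgebra.counit (R := k) (f j) = 0

/-- A Hopf pairing `⟨-,-⟩ : U × O → k` between two bialgebras, in elementwise form:
`⟨uv, x⟩ = ∑ ⟨u, x₍₁₎⟩⟨v, x₍₂₎⟩`, `⟨u, xy⟩ = ∑ ⟨u₍₁₎, x⟩⟨u₍₂₎, y⟩`, `⟨1, x⟩ = ε(x)`,
`⟨u, 1⟩ = ε(u)`. -/
structure IsHopfPairing {k : Type u} [Field k] {U O : Type v}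
    [Ring U] [Bialgebra k U] [Ring O] [Bialgebra k O]
    (pair : U →ₗ[k] O →ₗ[k] k) : Prop where
  pair_mul_left : ∀ (u v : U) (z : O) (m : ℕ) (y y' : Fin m → O),
    Coalgebra.comul (R := k) z = ∑ s, y s ⊗ₜ[k] y' s →
    pair (u * v) z = ∑ s, pair u (y s) * pair v (y' s)
  pair_mul_right : ∀ (u : U) (z w : O) (m : ℕ) (p q : Fin m → U),
    Coalgebra.comul (R := k) u = ∑ s, p s ⊗ₜ[k] q s →
    pair u (z * w) = ∑ s, pair (p s) z * pair (q s) w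
  pair_one_left : ∀ z : O, pair 1 z = Coalgebra.counit (R := k) z
  pair_one_right : ∀ u : U, pair u 1 = Coalgebra.counit (R := k) u

/-- The values of the Hopf pairing between `U_{α,β}(gl_n)` and `O_{α,β}(GL_n)`
on the generators. -/
structure PairVals {k : Type u} [Field k] {U O : Type v}
    [Ring U] [Algebra k U] [Ring O] [Algebra k O]
    (n : ℕ) (α β : k) (a ai b bi e f : ℕ → U) (x : ℕ → ℕ → O)
    (pair : U →ₗ[k] O →ₗ[k] k) : Prop where
  val_a : ∀ i s t, 1 ≤ i → i ≤ n → 1 ≤ s → s ≤ n → 1 ≤ t → t ≤ n →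
    pair (a i) (x s t) = if s = t then (if i = s then α else 1) else 0
  val_ai : ∀ i s t, 1 ≤ i → i ≤ n → 1 ≤ s → s ≤ n → 1 ≤ t → t ≤ n →
    pair (ai i) (x s t) = if s = t then (if i = s then α⁻¹ else 1) else 0
  val_b : ∀ i s t, 1 ≤ i → i ≤ n → 1 ≤ s → s ≤ n → 1 ≤ t → t ≤ n →
    pair (b i) (x s t) = if s = t then (if i = s then β else 1) else 0
  val_bi : ∀ i s t, 1 ≤ i → i ≤ n → 1 ≤ s → s ≤ n → 1 ≤ t → t ≤ n →
    pair (bi i) (x s t) = if s = t then (if i = s then β⁻¹ else 1) else 0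
  val_e : ∀ j s t, 1 ≤ j → j < n → 1 ≤ s → s ≤ n → 1 ≤ t → t ≤ n →
    pair (e j) (x s t) = if j = s ∧ t = j + 1 then 1 else 0
  val_f : ∀ j s t, 1 ≤ j → j < n → 1 ≤ s → s ≤ n → 1 ≤ t → t ≤ n →
    pair (f j) (x s t) = if s = j + 1 ∧ t = j then 1 else 0

/-- The defining relations of `O_{α,β}(M_n)` for a family `x i j` (`1 ≤ i,j ≤ n`)
indexed by natural numbers. -/
def QMRelN {k : Type u} [Field k] {O : Type v} [Ring O] [Algebra k O]
    (n : ℕ) (α β : k) (x : ℕ → ℕ → O) : Prop :=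
  (∀ i j l, 1 ≤ i → i ≤ n → 1 ≤ j → 1 ≤ l → l ≤ n → j < l →
    x i l * x i j = α⁻¹ • (x i j * x i l)) ∧
  (∀ i j l, 1 ≤ i → 1 ≤ j → j ≤ n → 1 ≤ l → l ≤ n → i < j →
    x j l * x i l = β • (x i l * x j l)) ∧
  (∀ i j l m, 1 ≤ i → 1 ≤ j → j ≤ n → 1 ≤ l → 1 ≤ m → m ≤ n → i < j → l < m →
    x j l * x i m = (β * α) • (x i m * x j l)) ∧
  (∀ i j l m, 1 ≤ i → 1 ≤ j → j ≤ n → 1 ≤ l → 1 ≤ m → m ≤ n → i < j → l < m →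
    x j m * x i l - x i l * x j m = (β - α) • (x i m * x j l))

/-- The comultiplication and counit of `O_{α,β}(M_n)` on the generators,
for a family indexed by natural numbers. -/
def OComulN (k : Type u) [Field k] {O : Type v} [Ring O] [Bialgebra k O]
    (n : ℕ) (x : ℕ → ℕ → O) : Prop :=
  (∀ i j, 1 ≤ i → i ≤ n → 1 ≤ j → j ≤ n →
    Coalgebra.comul (R := k) (x i j) = ∑ s ∈ Finset.Icc 1 n, x i s ⊗ₜ[k] x s j) ∧
  (∀ i j, 1 ≤ i → i ≤ n → 1 ≤ j → j ≤ n →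
    Coalgebra.counit (R := k) (x i j) = if i = j then (1 : k) else 0)

/-- for every generator `u` of `U_{α,β}(gl_n)` one has
`⟨u, x_{st}^ℓ⟩ = δ_{st} ε(u)`; explicitly `⟨a_i^{±1}, x_{st}^ℓ⟩ = δ_{st} = ⟨b_i^{±1}, x_{st}^ℓ⟩`
and `⟨e_j, x_{st}^ℓ⟩ = 0 = ⟨f_j, x_{st}^ℓ⟩`. -/
theorem pairing_with_l_th_powers
    {k : Type u} [Field k] [IsAlgClosed k] [CharZero k]
    {U O : Type v} [Ring U] [Bialgebra k U] [Ring O] [Bialgebra k O]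
    (n : ℕ) (hn : 0 < n) (α β : k) (hα : α ≠ 0) (hβ : β ≠ 0)
    (ℓ : ℕ) (hodd : Odd ℓ) (hl3 : 3 ≤ ℓ)
    (hprim : IsPrimitiveRoot (α⁻¹ * β) ℓ) (hαl : α ^ ℓ = 1) (hβl : β ^ ℓ = 1)
    (hne1 : α ≠ β) (hne2 : α ≠ -β) (hne3 : α ≠ β⁻¹)
    (a ai b bi e f : ℕ → U) (x : ℕ → ℕ → O)
    (hUrel : UglRel n α β a ai b bi e f) (hUcom : UglComul k n a ai b bi e f)
    (hOrel : QMRelN n α β x) (hOcom : OComulN k n x)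
    (pair : U →ₗ[k] O →ₗ[k] k)
    (hpair : IsHopfPairing pair)
    (hvals : PairVals n α β a ai b bi e f x pair) :
    ∀ s t, 1 ≤ s → s ≤ n → 1 ≤ t → t ≤ n →
      (∀ i, 1 ≤ i → i ≤ n →
        pair (a i) (x s t ^ ℓ) = (if s = t then 1 else 0) ∧
        pair (ai i) (x s t ^ ℓ) = (if s = t then 1 else 0) ∧
        pair (b i) (x s t ^ ℓ) = (if s = t then 1 else 0) ∧
        pair (bi i) (x s t ^ ℓ) = (if s = t then 1 else 0)) ∧
      (∀ j, 1 ≤ j → j < n →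
        pair (e j) (x s t ^ ℓ) = 0 ∧ pair (f j) (x s t ^ ℓ) = 0) := by
  intro s t hs1 hsn ht1 htn
  have hl0 : ℓ ≠ 0 := by omega
  -- comultiplication of x s t as a Fin-indexed sum
  have hIcc : Finset.Icc 1 n =
      Finset.map ⟨fun r => 1 + r, add_right_injective 1⟩ (Finset.range n) := by
    ext r
    simp only [Finset.mem_Icc, Finset.mem_map, Finset.mem_range, Function.Embedding.coeFn_mk]
    constructor
    · rintro ⟨h1, h2⟩; exact ⟨r - 1, by omega, by omega⟩
    · rintro ⟨m, hm, rfl⟩; omega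
  have hxc : ∀ s' t', 1 ≤ s' → s' ≤ n → 1 ≤ t' → t' ≤ n →
      Coalgebra.comul (R := k) (x s' t')
        = ∑ r : Fin n, x s' (1 + r.val) ⊗ₜ[k] x (1 + r.val) t' := by
    intro s' t' h1 h2 h3 h4
    rw [hOcom.1 s' t' h1 h2 h3 h4, hIcc, Finset.sum_map]
    simp only [Function.Embedding.coeFn_mk]
    exact (Fin.sum_univ_eq_sum_range (fun r => x s' (1 + r) ⊗ₜ[k] x (1 + r) t') n).symm
  -- grouplike elements pair multiplicatively
  have hGL : ∀ u : U, Coalgebra.comul (R := k) u = u ⊗ₜ[k] u →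
      ∀ z w : O, pair u (z * w) = pair u z * pair u w := by
    intro u hu z w
    have h := hpair.pair_mul_right u z w 1 (fun _ => u) (fun _ => u) (by simpa using hu)
    simpa using h
  have hGLpow : ∀ u : U, Coalgebra.comul (R := k) u = u ⊗ₜ[k] u →
      Coalgebra.counit (R := k) u = 1 →
      ∀ (z : O) (m : ℕ), pair u (z ^ m) = pair u z ^ m := by
    intro u hu hε z m
    induction m with
    | zero => simp [hpair.pair_one_right, hε]
    | succ m ih => rw [pow_succ, hGL u hu, ih, pow_succ]
  -- values of pairing with a p * b q on generators
  have hgval : ∀ p q s' t', 1 ≤ p → p ≤ n → 1 ≤ q → q ≤ n →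
      1 ≤ s' → s' ≤ n → 1 ≤ t' → t' ≤ n →
      pair (a p * b q) (x s' t')
        = if s' = t' then (if p = s' then α else 1) * (if q = s' then β else 1) else 0 := by
    intro p q s' t' hp1 hpn hq1 hqn h1 h2 h3 h4
    rw [hpair.pair_mul_left (a p) (b q) (x s' t') n
      (fun r => x s' (1 + r.val)) (fun r => x (1 + r.val) t') (hxc s' t' h1 h2 h3 h4)]
    have hterm : ∀ r : Fin n,
        pair (a p) (x s' (1 + r.val)) * pair (b q) (x (1 + r.val) t')
          = (if s' = 1 + r.val then (if p = s' then α else 1) else 0)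
            * (if 1 + r.val = t' then (if q = 1 + r.val then β else 1) else 0) := by
      intro r
      rw [hvals.val_a p s' (1 + r.val) hp1 hpn h1 h2 (by omega) (by omega),
        hvals.val_b q (1 + r.val) t' hq1 hqn (by omega) (by omega) h3 h4]
    by_cases hst : s' = t'
    · subst hst
      rw [if_pos rfl]
      rw [Finset.sum_eq_single (⟨s' - 1, by omega⟩ : Fin n)]
      · rw [hterm]
        have hval : 1 + ((⟨s' - 1, by omega⟩ : Fin n) : ℕ) = s' := by simp; omega
        rw [hval, if_pos rfl, if_pos rfl]
      · intro r _ hr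
        rw [hterm]
        have : s' ≠ 1 + r.val := by
          intro h
          apply hr
          apply Fin.ext
          simp; omega
        rw [if_neg this, zero_mul]
      · intro h; exact absurd (Finset.mem_univ _) h
    · rw [if_neg hst]
      apply Finset.sum_eq_zero
      intro r _
      rw [hterm]
      by_cases h : s' = 1 + r.val
      · rw [if_neg (by omega : ¬ (1 + r.val = t')), mul_zero]
      · rw [if_neg h, zero_mul]
  -- comul / counit of a p * b q
  have hgcom : ∀ p q, 1 ≤ p → p ≤ n → 1 ≤ q → q ≤ n →
      Coalgebra.comul (R := k) (a p * b q) = (a p * b q) ⊗ₜ[k] (a p * b q) := by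
    intro p q hp1 hpn hq1 hqn
    rw [Bialgebra.comul_mul, hUcom.com_a p hp1 hpn, hUcom.com_b q hq1 hqn,
      Algebra.TensorProduct.tmul_mul_tmul]
  have hgcou : ∀ p q, 1 ≤ p → p ≤ n → 1 ≤ q → q ≤ n →
      Coalgebra.counit (R := k) (a p * b q) = 1 := by
    intro p q hp1 hpn hq1 hqn
    rw [Bialgebra.counit_mul, hUcom.cou_a p hp1 hpn, hUcom.cou_b q hq1 hqn, one_mul]
  -- counit of x s t powers
  have hεx : Coalgebra.counit (R := k) (x s t) = if s = t then (1 : k) else 0 :=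
    hOcom.2 s t hs1 hsn ht1 htn
  refine ⟨?_, ?_⟩
  · -- grouplike generators
    intro i hi1 hin
    have hA : pair (a i) (x s t ^ ℓ) = (if s = t then 1 else 0) := by
      rw [hGLpow (a i) (hUcom.com_a i hi1 hin) (hUcom.cou_a i hi1 hin),
        hvals.val_a i s t hi1 hin hs1 hsn ht1 htn]
      by_cases hst : s = t
      · rw [if_pos hst, if_pos hst]
        by_cases his : i = s
        · rw [if_pos his, hαl]
        · rw [if_neg his, one_pow]
      · rw [if_neg hst, if_neg hst, zero_pow hl0]
    have hAi : pair (ai i) (x s t ^ ℓ) = (if s = t then 1 else 0) := by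
      rw [hGLpow (ai i) (hUcom.com_ai i hi1 hin) (hUcom.cou_ai i hi1 hin),
        hvals.val_ai i s t hi1 hin hs1 hsn ht1 htn]
      by_cases hst : s = t
      · rw [if_pos hst, if_pos hst]
        by_cases his : i = s
        · rw [if_pos his, inv_pow, hαl, inv_one]
        · rw [if_neg his, one_pow]
      · rw [if_neg hst, if_neg hst, zero_pow hl0]
    have hB : pair (b i) (x s t ^ ℓ) = (if s = t then 1 else 0) := by
      rw [hGLpow (b i) (hUcom.com_b i hi1 hin) (hUcom.cou_b i hi1 hin),
        hvals.val_b i s t hi1 hin hs1 hsn ht1 htn]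
      by_cases hst : s = t
      · rw [if_pos hst, if_pos hst]
        by_cases his : i = s
        · rw [if_pos his, hβl]
        · rw [if_neg his, one_pow]
      · rw [if_neg hst, if_neg hst, zero_pow hl0]
    have hBi : pair (bi i) (x s t ^ ℓ) = (if s = t then 1 else 0) := by
      rw [hGLpow (bi i) (hUcom.com_bi i hi1 hin) (hUcom.cou_bi i hi1 hin),
        hvals.val_bi i s t hi1 hin hs1 hsn ht1 htn]
      by_cases hst : s = t
      · rw [if_pos hst, if_pos hst]
        by_cases his : i = s
        · rw [if_pos his, inv_pow, hβl, inv_one]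
        · rw [if_neg his, one_pow]
      · rw [if_neg hst, if_neg hst, zero_pow hl0]
    exact ⟨hA, hAi, hB, hBi⟩
  · -- e and f generators
    intro j hj1 hjn
    have hj1n : 1 ≤ j + 1 := by omega
    have hjn' : j ≤ n := by omega
    have hjn1 : j + 1 ≤ n := by omega
    -- expansion lemma for e j
    have hpe : ∀ z w : O, pair (e j) (z * w)
        = pair (e j) z * Coalgebra.counit (R := k) w
          + pair (a j * b (j + 1)) z * pair (e j) w := by
      intro z w
      have h2 : Coalgebra.comul (R := k) (e j)
          = ∑ r : Fin 2, (![e j, a j * b (j + 1)] r) ⊗ₜ[k] (![(1 : U), e j] r) := by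
        rw [Fin.sum_univ_two]
        simpa using hUcom.com_e j hj1 hjn
      have h := hpair.pair_mul_right (e j) z w 2
        ![e j, a j * b (j + 1)] ![(1 : U), e j] h2
      rw [h, Fin.sum_univ_two]
      simp [hpair.pair_one_left]
    have hpf : ∀ z w : O, pair (f j) (z * w)
        = Coalgebra.counit (R := k) z * pair (f j) w
          + pair (f j) z * pair (a (j + 1) * b j) w := by
      intro z w
      have h2 : Coalgebra.comul (R := k) (f j)
          = ∑ r : Fin 2, (![(1 : U), f j] r) ⊗ₜ[k] (![f j, a (j + 1) * b j] r) := by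
        rw [Fin.sum_univ_two]
        simpa using hUcom.com_f j hj1 hjn
      have h := hpair.pair_mul_right (f j) z w 2
        ![(1 : U), f j] ![f j, a (j + 1) * b j] h2
      rw [h, Fin.sum_univ_two]
      simp [hpair.pair_one_left]
    have hvex : pair (e j) (x s t) = if j = s ∧ t = j + 1 then 1 else 0 :=
      hvals.val_e j s t hj1 hjn hs1 hsn ht1 htn
    have hvfx : pair (f j) (x s t) = if s = j + 1 ∧ t = j then 1 else 0 :=
      hvals.val_f j s t hj1 hjn hs1 hsn ht1 htn
    by_cases hst : s = t
    · -- diagonal case: induction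
      have hE : ∀ m : ℕ, pair (e j) (x s t ^ m) = 0 := by
        intro m
        induction m with
        | zero => rw [pow_zero, hpair.pair_one_right, hUcom.cou_e j hj1 hjn]
        | succ m ih =>
          rw [pow_succ, hpe, ih, zero_mul, zero_add, hvex,
            if_neg (by omega : ¬ (j = s ∧ t = j + 1)), mul_zero]
      have hF : ∀ m : ℕ, pair (f j) (x s t ^ m) = 0 := by
        intro m
        induction m with
        | zero => rw [pow_zero, hpair.pair_one_right, hUcom.cou_f j hj1 hjn]
        | succ m ih =>
          rw [pow_succ, hpf, ih, zero_mul, add_zero, hvfx,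
            if_neg (by omega : ¬ (s = j + 1 ∧ t = j)), mul_zero]
      exact ⟨hE ℓ, hF ℓ⟩
    · -- off-diagonal case
      have hℓ : ℓ = (ℓ - 1) + 1 := by omega
      have hε0 : Coalgebra.counit (R := k) (x s t ^ (ℓ - 1)) = 0 := by
        rw [Bialgebra.counit_pow, hεx, if_neg hst, zero_pow (by omega : ℓ - 1 ≠ 0)]
      have hE : pair (e j) (x s t ^ ℓ) = 0 := by
        rw [hℓ, pow_succ, hpe, hεx, if_neg hst, mul_zero, zero_add,
          hGLpow (a j * b (j + 1)) (hgcom j (j + 1) hj1 hjn' hj1n hjn1)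
            (hgcou j (j + 1) hj1 hjn' hj1n hjn1),
          hgval j (j + 1) s t hj1 hjn' hj1n hjn1 hs1 hsn ht1 htn,
          if_neg hst, zero_pow (by omega : ℓ - 1 ≠ 0), zero_mul]
      have hF : pair (f j) (x s t ^ ℓ) = 0 := by
        rw [hℓ, pow_succ, hpf, hε0, zero_mul, zero_add,
          hgval (j + 1) j s t hj1n hjn1 hj1 hjn' hs1 hsn ht1 htn,
          if_neg hst, mul_zero]
      exact ⟨hE, hF⟩
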